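/- Let G be a topological group. If the countable power G^ω is selectively pseudocompact, then G^κ is selectively pseudocompact for every infinite cardinal κ. -/

import Mathlib

open Filter Topology

/-- A free (nonprincipal) ultrafilter on ℕ. -/
def FreeUltrafilter (p : Ultrafilter ℕ) : Prop := ∀ n : ℕ, p ≠ pure n

/-- `l` is the `p`-limit of the sequence `x`. -/
def IsPLimit {X : Type*} [TopologicalSpace X] (p : Ultrafilter ℕ) (x : ℕ → X) (l : X) : Prop :=
  ∀ U ∈ nhds l, {n : ℕ | x n ∈ U} ∈ p

/-- A topological space is selectively pseudocompact. -/
def SelectivelyPseudocompact (X : Type*) [TopologicalSpace X] : Prop :=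
  ∀ U : ℕ → Set X, (∀ n, IsOpen (U n)) → (∀ n, (U n).Nonempty) →
    ∃ (x : ℕ → X) (l : X) (p : Ultrafilter ℕ),
      FreeUltrafilter p ∧ (∀ n, x n ∈ U n) ∧ IsPLimit p x l

/-- A topological space is countably compact: every infinite subset has an accumulation point. -/
def CountablyCompact (X : Type*) [TopologicalSpace X] : Prop :=
  ∀ S : Set X, S.Infinite → ∃ x : X, AccPt x (Filter.principal S)

/-- A topological space is countably pracompact. -/
def CountablyPracompact (X : Type*) [TopologicalSpace X] : Prop :=
  ∃ D : Set X, Dense D ∧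
    ∀ S : Set X, S ⊆ D → S.Infinite → ∃ x : X, AccPt x (Filter.principal S)

/-- A selective ultrafilter on ℕ. -/
def SelectiveUltrafilter (p : Ultrafilter ℕ) : Prop :=
  FreeUltrafilter p ∧
    ∀ A : ℕ → Set ℕ, Pairwise (Function.onFun Disjoint A) → (⋃ n, A n) = Set.univ →
      (∃ n, A n ∈ p) ∨ ∃ B ∈ p, ∀ n, (B ∩ A n).ncard = 1

/-- Rudin–Keisler order on ultrafilters on ℕ. -/
def RKle (p q : Ultrafilter ℕ) : Prop := ∃ f : ℕ → ℕ, Ultrafilter.map f q = p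

/-- RK-incomparability. -/
def RKIncomparable (p q : Ultrafilter ℕ) : Prop := ¬ RKle p q ∧ ¬ RKle q p

/-- The restriction of a finitely supported `ZMod 2`-valued function (a finite subset of `X`)
to a set `S` (the intersection with `S`). -/
noncomputable def restrictSet {X : Type*} (S : Set X) (f : X →₀ ZMod 2) : X →₀ ZMod 2 :=
  letI := Classical.decPred (· ∈ S)
  Finsupp.filter (· ∈ S) f

/-- A topological space is pseudocompact: every continuous real-valued function is bounded. -/
def Pseudocompact (X : Type*) [TopologicalSpace X] : Prop :=
  ∀ f : X → ℝ, Continuous f → ∃ M : ℝ, ∀ x : X, |f x| ≤ M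

/-- If `G^ω` is selectively pseudocompact, then `G^κ` is selectively
pseudocompact for every infinite cardinal `κ`. -/
theorem stmt0 {G : Type*} [Group G] [TopologicalSpace G] [IsTopologicalGroup G]
    (h : SelectivelyPseudocompact (ℕ → G)) :
    ∀ κ : Cardinal.{0}, Cardinal.aleph0 ≤ κ → SelectivelyPseudocompact (κ.out → G) := by
  classical
  intro κ hκ
  haveI : Infinite κ.out := by
    rw [Cardinal.infinite_iff, Cardinal.mk_out]; exact hκ
  intro U hUopen hUne
  choose y hy using hUne
  have hbasic : ∀ n, ∃ (I : Finset κ.out) (u : κ.out → Set G),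
      (∀ i ∈ I, IsOpen (u i) ∧ y n i ∈ u i) ∧ Set.pi ↑I u ⊆ U n := fun n =>
    (isOpen_pi_iff.mp (hUopen n)) (y n) (hy n)
  choose I u hu hsub using hbasic
  set S : Set κ.out := ⋃ n, (I n : Set κ.out) with hSdef
  obtain ⟨e, he_inj, he_range⟩ : ∃ e : ℕ → κ.out, Function.Injective e ∧ S ⊆ Set.range e := by
    have hS : S.Countable := Set.countable_iUnion fun n => (I n).countable_toSet
    let g := Infinite.natEmbedding κ.out
    set T := S ∪ Set.range g with hTdef
    have hT : T.Countable := hS.union (Set.countable_range g)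
    have hTinf : T.Infinite :=
      ((Set.infinite_range_of_injective g.injective).mono Set.subset_union_right)
    haveI := hT.to_subtype
    haveI := hTinf.to_subtype
    obtain ⟨eqv⟩ : Nonempty (ℕ ≃ T) := nonempty_equiv_of_countable
    exact ⟨fun n => (eqv n : κ.out), Subtype.val_injective.comp eqv.injective,
      fun i hi => ⟨eqv.symm ⟨i, Or.inl hi⟩, by simp⟩⟩
  -- the continuous "extension" map from G^ω to G^κ
  set Φ : (ℕ → G) → (κ.out → G) :=
    fun g i => if h : i ∈ Set.range e then g (Function.invFun e i) else 1 with hΦdef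
  have hΦcont : Continuous Φ := by
    apply continuous_pi
    intro i
    by_cases hi : i ∈ Set.range e
    · simp only [hΦdef, dif_pos hi]
      exact continuous_apply (Function.invFun e i)
    · simp only [hΦdef, dif_neg hi]
      exact continuous_const
  have hΦval : ∀ g i, i ∈ Set.range e → Φ g i = g (Function.invFun e i) := by
    intro g i hi; simp only [hΦdef]; rw [dif_pos hi]
  set W : ℕ → Set (ℕ → G) := fun n => Φ ⁻¹' (Set.pi ↑(I n) (u n)) with hWdef
  have hWopen : ∀ n, IsOpen (W n) := fun n =>
    (isOpen_set_pi (I n).finite_toSet (fun i hi => (hu n i hi).1)).preimage hΦcont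
  have hWne : ∀ n, (W n).Nonempty := by
    intro n
    refine ⟨fun m => y n (e m), ?_⟩
    intro i hi
    have hiS : i ∈ S := Set.mem_iUnion.2 ⟨n, hi⟩
    have hie : i ∈ Set.range e := he_range hiS
    have : Φ (fun m => y n (e m)) i = y n (e (Function.invFun e i)) := hΦval (fun m => y n (e m)) i hie
    rw [this, Function.invFun_eq hie]
    exact (hu n i hi).2
  obtain ⟨x, l, p, hp, hxW, hlim⟩ := h W hWopen hWne
  refine ⟨fun n => Φ (x n), Φ l, p, hp, fun n => hsub n (hxW n), ?_⟩
  intro V hV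
  exact hlim (Φ ⁻¹' V) ((hΦcont.tendsto l) hV)
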